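/- Let C ⊆ ℝ^q be a solid pointed polyhedral cone, c ∈ int C, S = {x : Bx ≥ b} ≠ ∅, and t ∈ ℝ^q. If (x̄, z̄) is an optimal solution of the program P₂(t): min z s.t. Bx ≥ b, Px ≤_C t + z·c, then: t ∉ 𝒫 iff z̄ > 0; t is weakly C-minimal in 𝒫 iff z̄ = 0; and t ∈ int 𝒫 iff z̄ < 0, where 𝒫 = P[S] + C. -/
import Mathlib

open Matrix

/-- Characterization of the position of t relative to 𝒫 = P[S] + C via the sign of the
optimal value z̄ of the translative scalarization P₂(t). -/
theorem P2_optimal_value_characterization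
    (q n m p : ℕ)
    (B : Matrix (Fin m) (Fin n) ℝ) (b : Fin m → ℝ) (P : Matrix (Fin q) (Fin n) ℝ)
    (Y : Matrix (Fin q) (Fin p) ℝ)
    (C : Set (Fin q → ℝ))
    (hC : C = {y | ∃ lam : Fin p → ℝ, 0 ≤ lam ∧ y = Y.mulVec lam})
    (hCpointed : ∀ x ∈ C, -x ∈ C → x = 0)
    (c : Fin q → ℝ) (hc : c ∈ interior C)
    (S : Set (Fin n → ℝ)) (hS : S = {x | b ≤ B.mulVec x}) (hSne : S.Nonempty)
    (Pup : Set (Fin q → ℝ))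
    (hPup : Pup = {y | ∃ x ∈ S, ∃ k ∈ C, y = P.mulVec x + k})
    (t : Fin q → ℝ) (xbar : Fin n → ℝ) (zbar : ℝ)
    (hfeas : b ≤ B.mulVec xbar ∧ t + zbar • c - P.mulVec xbar ∈ C)
    (hopt : ∀ x : Fin n → ℝ, ∀ z : ℝ,
      b ≤ B.mulVec x → t + z • c - P.mulVec x ∈ C → zbar ≤ z) :
    (t ∉ Pup ↔ 0 < zbar) ∧
    ((t ∈ Pup ∧ ∀ k ∈ interior C, t - k ∉ Pup) ↔ zbar = 0) ∧
    (t ∈ interior Pup ↔ zbar < 0) := by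
  obtain ⟨hfx, hfC⟩ := hfeas
  -- C is closed under addition
  have hadd : ∀ x ∈ C, ∀ y ∈ C, x + y ∈ C := by
    intro x hx y hy
    rw [hC] at hx hy ⊢
    obtain ⟨l, hl, rfl⟩ := hx
    obtain ⟨l', hl', rfl⟩ := hy
    exact ⟨l + l', add_nonneg hl hl', (Matrix.mulVec_add Y l l').symm⟩
  -- C is closed under nonnegative scalar multiplication
  have hsmul : ∀ (a : ℝ), 0 ≤ a → ∀ x ∈ C, a • x ∈ C := by
    intro a ha x hx
    rw [hC] at hx ⊢
    obtain ⟨l, hl, rfl⟩ := hx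
    exact ⟨a • l, smul_nonneg ha hl, (Matrix.mulVec_smul Y a l).symm⟩
  have hcC : c ∈ C := interior_subset hc
  -- t ∈ Pup ↔ zbar ≤ 0
  have hA : t ∈ Pup ↔ zbar ≤ 0 := by
    constructor
    · intro ht
      rw [hPup] at ht
      obtain ⟨x, hx, k, hk, heq⟩ := ht
      have hxS : b ≤ B.mulVec x := by rw [hS] at hx; exact hx
      have hfeas0 : t + (0 : ℝ) • c - P.mulVec x ∈ C := by
        have : t + (0 : ℝ) • c - P.mulVec x = k := by rw [heq]; module
        rw [this]; exact hk
      exact hopt x 0 hxS hfeas0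
    · intro hz
      rw [hPup]
      refine ⟨xbar, by rw [hS]; exact hfx, t - P.mulVec xbar, ?_, by abel⟩
      have h1 := hadd _ hfC _ (hsmul (-zbar) (by linarith) c hcC)
      have h2 : t - P.mulVec xbar =
          (t + zbar • c - P.mulVec xbar) + (-zbar) • c := by module
      rw [h2]; exact h1
  -- positive scalar multiples of interior points are interior
  have hintsmul : ∀ (a : ℝ), 0 < a → ∀ k ∈ interior C, a • k ∈ interior C := by
    intro a ha k hk
    have hmap : IsOpenMap (fun x : Fin q → ℝ => a • x) := isOpenMap_smul₀ (ne_of_gt ha)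
    have hopen : IsOpen ((fun x : Fin q → ℝ => a • x) '' interior C) :=
      hmap _ isOpen_interior
    have hsub : (fun x : Fin q → ℝ => a • x) '' interior C ⊆ C := by
      rintro _ ⟨v, hv, rfl⟩
      exact hsmul a ha.le v (interior_subset hv)
    exact interior_maximal hsub hopen ⟨k, hk, rfl⟩
  -- Pup + interior C ⊆ interior Pup
  have hPupadd : ∀ y ∈ Pup, ∀ u ∈ interior C, y + u ∈ interior Pup := by
    intro y hy u hu
    have hopen : IsOpen ((fun v : Fin q → ℝ => y + v) '' interior C) :=
      (isOpenMap_add_left y) _ isOpen_interior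
    have hsub : (fun v : Fin q → ℝ => y + v) '' interior C ⊆ Pup := by
      rintro _ ⟨v, hv, rfl⟩
      rw [hPup] at hy ⊢
      obtain ⟨x, hx, k, hk, heq⟩ := hy
      exact ⟨x, hx, k + v, hadd _ hk _ (interior_subset hv), by rw [heq]; abel⟩
    exact interior_maximal hsub hopen ⟨u, hu, rfl⟩
  -- small ε perturbation along -c stays in an open set
  have heps : ∀ (U : Set (Fin q → ℝ)) (k : Fin q → ℝ), IsOpen U → k ∈ U →
      ∃ ε : ℝ, 0 < ε ∧ k - ε • c ∈ U := by
    intro U k hU hk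
    have hcont : Continuous (fun ε : ℝ => k - ε • c) :=
      continuous_const.sub (continuous_id.smul continuous_const)
    have hopen : IsOpen ((fun ε : ℝ => k - ε • c) ⁻¹' U) := hU.preimage hcont
    have h0 : (0 : ℝ) ∈ (fun ε : ℝ => k - ε • c) ⁻¹' U := by
      simp only [Set.mem_preimage, zero_smul, sub_zero]; exact hk
    rw [Metric.isOpen_iff] at hopen
    obtain ⟨δ, hδ, hball⟩ := hopen 0 h0
    refine ⟨δ / 2, by linarith, hball ?_⟩
    rw [Metric.mem_ball, Real.dist_eq, sub_zero, abs_of_pos (by linarith)]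
    linarith
  -- t ∈ interior Pup ↔ zbar < 0
  have hB : t ∈ interior Pup ↔ zbar < 0 := by
    constructor
    · intro ht
      obtain ⟨ε, hε, hmem⟩ := heps (interior Pup) t isOpen_interior ht
      have hmem' : t - ε • c ∈ Pup := interior_subset hmem
      rw [hPup] at hmem'
      obtain ⟨x, hx, k, hk, heq⟩ := hmem'
      have hfe : t + (-ε) • c - P.mulVec x ∈ C := by
        have : t + (-ε) • c - P.mulVec x = k := by
          have h' : t - ε • c = P.mulVec x + k := heq
          have : t = P.mulVec x + k + ε • c := by rw [← h']; module
          rw [this]; module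
        rw [this]; exact hk
      have := hopt x (-ε) (by rw [hS] at hx; exact hx) hfe
      linarith
    · intro hz
      have h1 : t + zbar • c ∈ Pup := by
        rw [hPup]
        exact ⟨xbar, by rw [hS]; exact hfx, t + zbar • c - P.mulVec xbar, hfC, by abel⟩
      have h2 : (-zbar) • c ∈ interior C := hintsmul _ (by linarith) c hc
      have h3 := hPupadd _ h1 _ h2
      have h4 : t = (t + zbar • c) + (-zbar) • c := by module
      rw [h4]; exact h3
  -- weak minimality ↔ zbar = 0
  have hWM : (t ∈ Pup ∧ ∀ k ∈ interior C, t - k ∉ Pup) ↔ zbar = 0 := by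
    constructor
    · rintro ⟨ht, hmin⟩
      have hle : zbar ≤ 0 := hA.mp ht
      rcases eq_or_lt_of_le hle with h | h
      · exact h
      · exfalso
        have h1 : t + zbar • c ∈ Pup := by
          rw [hPup]
          exact ⟨xbar, by rw [hS]; exact hfx, t + zbar • c - P.mulVec xbar, hfC, by abel⟩
        have h2 : (-zbar) • c ∈ interior C := hintsmul _ (by linarith) c hc
        have h3 : t - (-zbar) • c ∈ Pup := by
          have : t - (-zbar) • c = t + zbar • c := by module
          rw [this]; exact h1
        exact hmin _ h2 h3
    · intro hz
      refine ⟨hA.mpr (le_of_eq hz), ?_⟩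
      intro k hk htk
      rw [hPup] at htk
      obtain ⟨x, hx, k', hk', heq⟩ := htk
      obtain ⟨ε, hε, hkε⟩ := heps (interior C) k isOpen_interior hk
      have hfe : t + (-ε) • c - P.mulVec x ∈ C := by
        have h' : t - k = P.mulVec x + k' := heq
        have ht' : t = P.mulVec x + k' + k := sub_eq_iff_eq_add.mp heq
        have : t + (-ε) • c - P.mulVec x = (k - ε • c) + k' := by rw [ht']; module
        rw [this]
        exact hadd _ (interior_subset hkε) _ hk'
      have := hopt x (-ε) (by rw [hS] at hx; exact hx) hfe
      rw [hz] at this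
      linarith
  refine ⟨?_, hWM, hB⟩
  rw [hA, not_le]
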